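/- If a random variable ξ has a density q bounded by M > 0 and finite variance σ², then M ≥ 1/(12σ). In other words, the essential supremum of the density of any random variable with standard deviation σ is at least 1/(12σ). -/

import Mathlib

open MeasureTheory ProbabilityTheory

/-- If a random variable `ξ` has a density `q` bounded by `M > 0` and finite positive
variance `σ²`, then `M ≥ 1/(12 σ)`. -/
theorem stmt_0 {Ω : Type*} [MeasurableSpace Ω] {P : Measure Ω} [IsProbabilityMeasure P]
    (ξ : Ω → ℝ) (q : ℝ → ℝ) (M : ℝ) (hM : 0 < M)
    (hmeas : Measurable ξ)
    (hdens : Measure.map ξ P =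
      (volume : Measure ℝ).withDensity (fun x => ENNReal.ofReal (q x)))
    (hqM : ∀ᵐ x ∂(volume : Measure ℝ), q x ≤ M)
    (hL2 : MemLp ξ 2 P)
    (hvar : 0 < variance ξ P) :
    1 / (12 * Real.sqrt (variance ξ P)) ≤ M := by
  set μ := ∫ ω, ξ ω ∂P with hμ
  set t : ℝ := 1 / (4 * M) with ht
  have ht0 : 0 < t := by positivity
  -- the slab
  have hSmeas : MeasurableSet (Set.Icc (μ - t) (μ + t)) := measurableSet_Icc
  have hslab : P {ω | |ξ ω - μ| ≤ t} ≤ ENNReal.ofReal (2 * t * M) := by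
    have hset : {ω | |ξ ω - μ| ≤ t} = ξ ⁻¹' (Set.Icc (μ - t) (μ + t)) := by
      ext ω
      simp [Set.mem_Icc, abs_le, sub_le_iff_le_add, le_sub_iff_add_le]
      constructor
      · rintro ⟨h1, h2⟩; constructor <;> linarith
      · rintro ⟨h1, h2⟩; constructor <;> linarith
    rw [hset, ← Measure.map_apply hmeas hSmeas, hdens, withDensity_apply _ hSmeas]
    calc ∫⁻ x in Set.Icc (μ - t) (μ + t), ENNReal.ofReal (q x)
        ≤ ∫⁻ _x in Set.Icc (μ - t) (μ + t), ENNReal.ofReal M := by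
          refine lintegral_mono_ae ?_
          filter_upwards [ae_restrict_of_ae hqM] with x hx
          exact ENNReal.ofReal_le_ofReal hx
      _ = ENNReal.ofReal M * volume (Set.Icc (μ - t) (μ + t)) := by
          rw [setLIntegral_const]
      _ = ENNReal.ofReal (2 * t * M) := by
          rw [Real.volume_Icc]
          rw [← ENNReal.ofReal_mul hM.le]
          congr 1
          ring_nf
  set A : Set Ω := {ω | t < |ξ ω - μ|} with hA
  have hAmeas : MeasurableSet A :=
    measurableSet_lt measurable_const (hmeas.sub_const μ).abs
  have hAc : Aᶜ = {ω | |ξ ω - μ| ≤ t} := by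
    ext ω; simp [hA, not_lt]
  -- P A ≥ 1/2 (real)
  have h2tM : 2 * t * M = 1/2 := by rw [ht]; field_simp; ring
  have hPA : (1:ℝ)/2 ≤ (P A).toReal := by
    have h1 : P Aᶜ ≤ ENNReal.ofReal (1/2) := by rw [hAc]; rw [h2tM] at hslab; exact hslab
    have h2 : P A = 1 - P Aᶜ := by
      rw [prob_compl_eq_one_sub hAmeas, ENNReal.sub_sub_cancel ENNReal.one_ne_top prob_le_one]
    have h3 : (P Aᶜ).toReal ≤ 1/2 := by
      refine (ENNReal.toReal_le_toReal (measure_ne_top _ _) ENNReal.ofReal_ne_top).2 h1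
        |>.trans ?_
      rw [ENNReal.toReal_ofReal (by norm_num)]
    have h4 : (P A).toReal = 1 - (P Aᶜ).toReal := by
      rw [h2, ENNReal.toReal_sub_of_le prob_le_one ENNReal.one_ne_top, ENNReal.toReal_one]
    linarith
  -- variance lower bound
  have hvlb : t^2 * (1/2) ≤ variance ξ P := by
    have hveq : variance ξ P = ∫ ω, (ξ ω - μ)^2 ∂P := by
      exact variance_eq_integral hmeas.aemeasurable
    rw [hveq]
    have hint : Integrable (fun ω => (ξ ω - μ)^2) P := by
      have := (hL2.sub (memLp_const μ)).integrable_sq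
      simpa [pow_two] using this
    calc t^2 * (1/2) ≤ t^2 * (P A).toReal := by
          have := sq_nonneg t
          nlinarith
      _ = ∫ ω, A.indicator (fun _ => t^2) ω ∂P := by
          rw [integral_indicator_const _ hAmeas, smul_eq_mul]; exact mul_comm _ _
      _ ≤ ∫ ω, (ξ ω - μ)^2 ∂P := by
          refine integral_mono_of_nonneg ?_ hint ?_
          · filter_upwards with ω
            exact Set.indicator_nonneg (fun _ _ => sq_nonneg t) ω
          · filter_upwards with ω
            by_cases hω : ω ∈ A
            · rw [Set.indicator_of_mem hω]
              have : t ≤ |ξ ω - μ| := le_of_lt hω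
              calc t^2 ≤ |ξ ω - μ|^2 := by nlinarith [abs_nonneg (ξ ω - μ)]
                _ = (ξ ω - μ)^2 := sq_abs _
            · rw [Set.indicator_of_notMem hω]; exact sq_nonneg _
  -- finish
  have hVlb : 1/(32*M^2) ≤ variance ξ P := by
    rw [ht] at hvlb
    calc (1:ℝ)/(32*M^2) = (1/(4*M))^2 * (1/2) := by field_simp; ring
      _ ≤ _ := hvlb
  have hs : 1/(12*M) ≤ Real.sqrt (variance ξ P) := by
    rw [show (1:ℝ)/(12*M) = Real.sqrt ((1/(12*M))^2) from
      (Real.sqrt_sq (by positivity)).symm]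
    apply Real.sqrt_le_sqrt
    calc (1/(12*M))^2 = 1/(144*M^2) := by field_simp; ring
      _ ≤ 1/(32*M^2) := by
          apply div_le_div_of_nonneg_left one_pos.le (by positivity) (by nlinarith)
      _ ≤ _ := hVlb
  have hsq : 0 < Real.sqrt (variance ξ P) := Real.sqrt_pos.2 hvar
  rw [div_le_iff₀ (by positivity)]
  calc (1:ℝ) = (1/(12*M)) * (M * 12) := by field_simp
    _ ≤ Real.sqrt (variance ξ P) * (M*12) := by
        apply mul_le_mul_of_nonneg_right hs (by positivity)
    _ = M * (12 * Real.sqrt (variance ξ P)) := by ring
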